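/- arXiv:1907.10089 — 4 statements merged into one kernel-verified Lean document; each statement's English description precedes it below -/
import Mathlib

section
/- In the graded ring ℤ[c_1, c_2, ...] / I, where I is the ideal generated by the elements S_s := c_s^2 + 2·∑_{i=1}^{s} (-1)^i c_{s+i} c_{s-i} for all s > k (with conventions c_0 = 1, c_m = 0 for m < 0), the reduction modulo 2 is isomorphic as a (ℤ/2)-algebra to (ℤ/2)[c_1,...,c_k] ⊗ (ℤ/2)[c_{k+1}, c_{k+2}, ...]/⟨c_{k+1}^2, c_{k+2}^2, ...⟩. -/
open MvPolynomial TensorProduct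

/-- `c_m` as an element of `ℤ[c_1, c_2, …]`, encoded in `MvPolynomial ℕ ℤ` with the
variable `X j` representing `c_{j+1}`; `c_0 = 1`. -/
noncomputable def cC (m : ℕ) : MvPolynomial ℕ ℤ := if m = 0 then 1 else X (m - 1)

/-- The relation `S^s : c_s^2 + 2 ∑_{i=1}^s (-1)^i c_{s+i} c_{s-i}`. -/
noncomputable def relC (s : ℕ) : MvPolynomial ℕ ℤ :=
  cC s ^ 2 + 2 * ∑ i ∈ Finset.Icc 1 s, ((-1) ^ i : MvPolynomial ℕ ℤ) * cC (s + i) * cC (s - i)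

/-- The ideal generated by the relations `S^s` for `s > k`. -/
noncomputable def relIdealC (k : ℕ) : Ideal (MvPolynomial ℕ ℤ) :=
  Ideal.span {p : MvPolynomial ℕ ℤ | ∃ s : ℕ, k < s ∧ p = relC s}

noncomputable section StmtAux

/-- reduction mod 2 of coefficients, as a `ℤ`-algebra hom. -/
def phiA : MvPolynomial ℕ ℤ →ₐ[ℤ] MvPolynomial ℕ (ZMod 2) :=
  MvPolynomial.mapAlgHom (Algebra.ofId ℤ (ZMod 2))

@[simp] lemma phiA_X (j : ℕ) : phiA (X j) = X j := by
  simp [phiA]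

/-- Base change of a quotient of `ℤ[X]` to `ℤ/2`. -/
def baseChangeEquiv (I : Ideal (MvPolynomial ℕ ℤ)) :
    (ZMod 2 ⊗[ℤ] (MvPolynomial ℕ ℤ ⧸ I)) ≃ₐ[ZMod 2]
      (MvPolynomial ℕ (ZMod 2) ⧸ I.map phiA) := by
  set J := I.map phiA with hJ
  set g : (MvPolynomial ℕ ℤ ⧸ I) →ₐ[ℤ] (MvPolynomial ℕ (ZMod 2) ⧸ J) :=
    Ideal.Quotient.liftₐ I ((Ideal.Quotient.mkₐ ℤ J).comp phiA)
      (fun a ha => by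
        simp only [AlgHom.comp_apply, Ideal.Quotient.mkₐ_eq_mk]
        exact Ideal.Quotient.eq_zero_iff_mem.mpr (Ideal.mem_map_of_mem _ ha)) with hg
  set fwd : (ZMod 2 ⊗[ℤ] (MvPolynomial ℕ ℤ ⧸ I)) →ₐ[ZMod 2]
      (MvPolynomial ℕ (ZMod 2) ⧸ J) :=
    Algebra.TensorProduct.lift (Algebra.ofId (ZMod 2) _) g (fun _ _ => Commute.all _ _) with hfwd
  set gfun : ℕ → (ZMod 2 ⊗[ℤ] (MvPolynomial ℕ ℤ ⧸ I)) :=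
    fun j => (1 : ZMod 2) ⊗ₜ (Ideal.Quotient.mk I (X j)) with hgfun
  set bw0 : MvPolynomial ℕ (ZMod 2) →ₐ[ZMod 2] (ZMod 2 ⊗[ℤ] (MvPolynomial ℕ ℤ ⧸ I)) :=
    aeval gfun with hbw0
  have key : ((bw0.restrictScalars ℤ).comp phiA)
      = (Algebra.TensorProduct.includeRight.comp (Ideal.Quotient.mkₐ ℤ I)) := by
    apply MvPolynomial.algHom_ext
    intro j
    show bw0 (phiA (X j)) = _
    rw [phiA_X, hbw0, aeval_X]
    simp [hgfun]
  have hker : ∀ a ∈ J, bw0 a = 0 := by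
    intro a ha
    have hle : J ≤ RingHom.ker bw0.toRingHom := by
      rw [hJ]
      refine Ideal.map_le_iff_le_comap.mpr (fun p hp => ?_)
      show bw0.toRingHom (phiA p) = 0
      have hp0 : (Ideal.Quotient.mk I p) = 0 := Ideal.Quotient.eq_zero_iff_mem.mpr hp
      have h2 : bw0 (phiA p) =
          Algebra.TensorProduct.includeRight (Ideal.Quotient.mk I p) :=
        DFunLike.congr_fun key p
      rw [hp0, map_zero] at h2
      exact h2
    exact hle ha
  set bwd : (MvPolynomial ℕ (ZMod 2) ⧸ J) →ₐ[ZMod 2]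
      (ZMod 2 ⊗[ℤ] (MvPolynomial ℕ ℤ ⧸ I)) :=
    Ideal.Quotient.liftₐ J bw0 hker with hbwd
  refine AlgEquiv.ofAlgHom fwd bwd ?_ ?_
  · apply Ideal.Quotient.algHom_ext
    apply MvPolynomial.algHom_ext
    intro j
    simp [hfwd, hbwd, hbw0, hgfun, hg]
    erw [Ideal.Quotient.lift_mk]
    simp
    erw [Ideal.Quotient.lift_mk]
    simp
  · apply Algebra.TensorProduct.ext
    · refine AlgHom.ext fun r => ?_
      rw [show (r : ZMod 2) = algebraMap (ZMod 2) (ZMod 2) r from rfl]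
      simp only [AlgHom.commutes]
    · apply Ideal.Quotient.algHom_ext
      apply MvPolynomial.algHom_ext
      intro j
      simp [hfwd, hbwd, hbw0, hgfun, hg]
      erw [Ideal.Quotient.lift_mk]
      simp

lemma Q2_two_eq_zero : (2 : MvPolynomial ℕ (ZMod 2)) = 0 := by
  have h : ((2 : ZMod 2) : ZMod 2) = 0 := by decide
  calc (2 : MvPolynomial ℕ (ZMod 2)) = C (2 : ZMod 2) := (map_ofNat C 2).symm
    _ = C 0 := by rw [h]
    _ = 0 := map_zero _

lemma phiA_relC (s : ℕ) (hs : s ≠ 0) : phiA (relC s) = X (s - 1) ^ 2 := by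
  have h2 : phiA 2 = 2 := map_ofNat _ 2
  have hc : phiA (cC s) = X (s - 1) := by
    rw [cC, if_neg hs, phiA_X]
  rw [relC, map_add, map_mul, h2, Q2_two_eq_zero, zero_mul, add_zero, map_pow, hc]

lemma map_relIdeal (k : ℕ) (hk : 1 ≤ k) :
    (relIdealC k).map phiA =
      Ideal.span {q : MvPolynomial ℕ (ZMod 2) | ∃ j : ℕ, k ≤ j ∧ q = X j ^ 2} := by
  rw [relIdealC, Ideal.map_span]
  congr 1
  ext q
  constructor
  · rintro ⟨p, ⟨s, hs, rfl⟩, rfl⟩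
    exact ⟨s - 1, by omega, phiA_relC s (by omega)⟩
  · rintro ⟨j, hj, rfl⟩
    refine ⟨relC (j + 1), ⟨j + 1, by omega, rfl⟩, ?_⟩
    rw [phiA_relC (j + 1) (by omega)]
    simp

/-- Splitting the variables into the first `k` and the rest. -/
def splitEquiv (k : ℕ) : ℕ ≃ (Fin k ⊕ ℕ) where
  toFun n := if h : n < k then Sum.inl ⟨n, h⟩ else Sum.inr (n - k)
  invFun x := match x with | Sum.inl i => (i : ℕ) | Sum.inr j => k + j
  left_inv n := by
    by_cases h : n < k
    · simp [h]
    · simp only [dif_neg h]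
      omega
  right_inv x := by
    rcases x with i | j
    · simp [i.isLt]
    · have h : ¬ (k + j < k) := by omega
      simp [h]

end StmtAux

set_option maxHeartbeats 1000000 in
set_option synthInstance.maxHeartbeats 400000 in
/-- The reduction mod 2 of `ℤ[c_1,c_2,…]/⟨S^s : s>k⟩` is isomorphic, as a
`ℤ/2`-algebra, to `(ℤ/2)[c_1,…,c_k] ⊗ (ℤ/2)[c_{k+1},…]/⟨c_{k+1}^2, c_{k+2}^2, …⟩`.
In the second tensor factor the variable `X j` represents `c_{k+1+j}`. -/
theorem stmt3 (k : ℕ) (hk : 1 ≤ k) :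
    Nonempty
      ((ZMod 2 ⊗[ℤ] (MvPolynomial ℕ ℤ ⧸ relIdealC k)) ≃ₐ[ZMod 2]
        (MvPolynomial (Fin k) (ZMod 2) ⊗[ZMod 2]
          (MvPolynomial ℕ (ZMod 2) ⧸
            Ideal.span (Set.range fun j : ℕ => (X j : MvPolynomial ℕ (ZMod 2)) ^ 2)))) := by
  classical
  set J0 : Ideal (MvPolynomial ℕ (ZMod 2)) :=
    Ideal.span (Set.range fun j : ℕ => (X j : MvPolynomial ℕ (ZMod 2)) ^ 2) with hJ0
  -- step 1: base change
  have e1 : (ZMod 2 ⊗[ℤ] (MvPolynomial ℕ ℤ ⧸ relIdealC k)) ≃ₐ[ZMod 2]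
      (MvPolynomial ℕ (ZMod 2) ⧸ (relIdealC k).map phiA) := baseChangeEquiv _
  -- step 2: identify the ideal
  have e2 : (MvPolynomial ℕ (ZMod 2) ⧸ (relIdealC k).map phiA) ≃ₐ[ZMod 2]
      (MvPolynomial ℕ (ZMod 2) ⧸
        Ideal.span {q : MvPolynomial ℕ (ZMod 2) | ∃ j : ℕ, k ≤ j ∧ q = X j ^ 2}) :=
    Ideal.quotientEquivAlgOfEq _ (map_relIdeal k hk)
  -- step 3: rename variables along `splitEquiv k`
  have hmap3 : Ideal.span {q : MvPolynomial (Fin k ⊕ ℕ) (ZMod 2) |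
        ∃ j : ℕ, q = X (Sum.inr j) ^ 2} =
      (Ideal.span {q : MvPolynomial ℕ (ZMod 2) | ∃ j : ℕ, k ≤ j ∧ q = X j ^ 2}).map
        (renameEquiv (ZMod 2) (splitEquiv k) : MvPolynomial ℕ (ZMod 2) →+*
          MvPolynomial (Fin k ⊕ ℕ) (ZMod 2)) := by
    rw [Ideal.map_span]
    congr 1
    ext q
    constructor
    · rintro ⟨j, rfl⟩
      refine ⟨X (k + j) ^ 2, ⟨k + j, by omega, rfl⟩, ?_⟩
      have : splitEquiv k (k + j) = Sum.inr j := by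
        simp only [splitEquiv, Equiv.coe_fn_mk, dif_neg (by omega : ¬ (k + j < k))]
        congr 1
        omega
      simp [this]
    · rintro ⟨p, ⟨j, hj, rfl⟩, rfl⟩
      refine ⟨j - k, ?_⟩
      have : splitEquiv k j = Sum.inr (j - k) := by
        simp only [splitEquiv, Equiv.coe_fn_mk, dif_neg (by omega : ¬ (j < k))]
      simp [this]
  have e3 : (MvPolynomial ℕ (ZMod 2) ⧸
        Ideal.span {q : MvPolynomial ℕ (ZMod 2) | ∃ j : ℕ, k ≤ j ∧ q = X j ^ 2})
      ≃ₐ[ZMod 2]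
      (MvPolynomial (Fin k ⊕ ℕ) (ZMod 2) ⧸
        Ideal.span {q : MvPolynomial (Fin k ⊕ ℕ) (ZMod 2) |
          ∃ j : ℕ, q = X (Sum.inr j) ^ 2}) :=
    Ideal.quotientEquivAlg _ _ (renameEquiv (ZMod 2) (splitEquiv k)) hmap3
  -- step 4: split off the first `k` variables
  have hmap4 : Ideal.map (C : MvPolynomial ℕ (ZMod 2) →+*
        MvPolynomial (Fin k) (MvPolynomial ℕ (ZMod 2))) J0 =
      (Ideal.span {q : MvPolynomial (Fin k ⊕ ℕ) (ZMod 2) |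
        ∃ j : ℕ, q = X (Sum.inr j) ^ 2}).map
        (sumAlgEquiv (ZMod 2) (Fin k) ℕ : MvPolynomial (Fin k ⊕ ℕ) (ZMod 2) →+*
          MvPolynomial (Fin k) (MvPolynomial ℕ (ZMod 2))) := by
    rw [hJ0, Ideal.map_span, Ideal.map_span]
    congr 1
    ext q
    constructor
    · rintro ⟨p, ⟨j, rfl⟩, rfl⟩
      exact ⟨X (Sum.inr j) ^ 2, ⟨j, rfl⟩, by simp⟩
    · rintro ⟨p, ⟨j, rfl⟩, rfl⟩
      exact ⟨X j ^ 2, ⟨j, rfl⟩, by simp⟩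
  have e4 : (MvPolynomial (Fin k ⊕ ℕ) (ZMod 2) ⧸
        Ideal.span {q : MvPolynomial (Fin k ⊕ ℕ) (ZMod 2) |
          ∃ j : ℕ, q = X (Sum.inr j) ^ 2})
      ≃ₐ[ZMod 2]
      (MvPolynomial (Fin k) (MvPolynomial ℕ (ZMod 2)) ⧸
        Ideal.map (C : MvPolynomial ℕ (ZMod 2) →+*
          MvPolynomial (Fin k) (MvPolynomial ℕ (ZMod 2))) J0) :=
    Ideal.quotientEquivAlg _ _ (sumAlgEquiv (ZMod 2) (Fin k) ℕ) hmap4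
  -- step 5: coefficients in the quotient
  have e5 : (MvPolynomial (Fin k) (MvPolynomial ℕ (ZMod 2)) ⧸
        Ideal.map (C : MvPolynomial ℕ (ZMod 2) →+*
          MvPolynomial (Fin k) (MvPolynomial ℕ (ZMod 2))) J0)
      ≃ₐ[ZMod 2]
      MvPolynomial (Fin k) (MvPolynomial ℕ (ZMod 2) ⧸ J0) :=
    ((MvPolynomial.quotientEquivQuotientMvPolynomial (σ := Fin k) J0).restrictScalars
      (ZMod 2)).symm
  -- step 6: pull the quotient coefficients out as a tensor factor
  have e6 : MvPolynomial (Fin k) (MvPolynomial ℕ (ZMod 2) ⧸ J0)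
      ≃ₐ[ZMod 2]
      ((MvPolynomial ℕ (ZMod 2) ⧸ J0) ⊗[ZMod 2] MvPolynomial (Fin k) (ZMod 2)) :=
    ((MvPolynomial.algebraTensorAlgEquiv (σ := Fin k) (ZMod 2)
      (MvPolynomial ℕ (ZMod 2) ⧸ J0)).restrictScalars (ZMod 2)).symm
  have e7 : ((MvPolynomial ℕ (ZMod 2) ⧸ J0) ⊗[ZMod 2] MvPolynomial (Fin k) (ZMod 2))
      ≃ₐ[ZMod 2]
      (MvPolynomial (Fin k) (ZMod 2) ⊗[ZMod 2] (MvPolynomial ℕ (ZMod 2) ⧸ J0)) :=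
    Algebra.TensorProduct.comm _ _ _
  exact ⟨e1.trans (e2.trans (e3.trans (e4.trans (e5.trans (e6.trans e7)))))⟩
end

section
/- Let k ≥ 1 and let B = ℤ[c_1, c_2, ...] / ⟨c_s^2 + 2∑_{i=1}^s (-1)^i c_{s+i}c_{s-i} : s > k⟩ (with c_0 = 1, c_m = 0 for m < 0). Then the ring homomorphism ξ: ℤ[e_1, ..., e_k] → B defined by e_i ↦ c_i^2 + 2∑_{j=1}^i (-1)^j c_{i+j}c_{i-j} is injective. -/
open MvPolynomial

/- ------------------ auxiliary lemmas ------------------ -/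

private lemma esymm_vanish {k s : ℕ} (h : k < s) : esymm (Fin k) ℤ s = 0 := by
  rw [esymm, Finset.powersetCard_eq_empty.mpr (by simpa using h), Finset.sum_empty]

private lemma expand_esymm (k j : ℕ) :
    expand (R := ℤ) 2 (esymm (Fin k) ℤ j)
      = ∑ t ∈ Finset.powersetCard j Finset.univ,
          ∏ i ∈ t, (X i : MvPolynomial (Fin k) ℤ) ^ 2 := by
  rw [esymm, map_sum]
  exact Finset.sum_congr rfl fun t _ => by
    rw [map_prod]
    exact Finset.prod_congr rfl fun i _ => expand_X 2 i

/-- generating function: `∏ (1 + cᵢ y) = ∑ⱼ eⱼ(c) yʲ`. -/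
private lemma gf_prod {S : Type*} [CommRing S] {k : ℕ} (c : Fin k → S) (y : S) :
    ∏ i : Fin k, (1 + c i * y) =
      ∑ j ∈ Finset.range (k + 1),
        (∑ t ∈ Finset.powersetCard j (Finset.univ : Finset (Fin k)), ∏ i ∈ t, c i) * y ^ j := by
  classical
  have h := Finset.prod_add (fun i : Fin k => c i * y) (fun _ => 1) Finset.univ
  simp only [Finset.prod_const_one, mul_one] at h
  have h0 : (∏ i : Fin k, (1 + c i * y)) = ∏ i : Fin k, (c i * y + 1) :=
    Finset.prod_congr rfl fun i _ => by ring
  rw [h0, h, Finset.sum_powerset]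
  refine Finset.sum_congr (by simp) fun j hj => ?_
  rw [Finset.sum_mul]
  refine Finset.sum_congr rfl fun t ht => ?_
  rw [Finset.prod_mul_distrib, Finset.prod_const, (Finset.mem_powersetCard.mp ht).2]

private lemma coeff_helper {A : Type*} [CommRing A] (N d : ℕ) (hd : d ≠ 0) (a : ℕ → A)
    (ha : ∀ j, N < j → a j = 0) (m : ℕ) :
    (∑ j ∈ Finset.range (N + 1), Polynomial.C (a j) * Polynomial.X ^ (d * j)).coeff (d * m)
      = a m := by
  rw [Polynomial.finset_sum_coeff]
  have hc : ∀ j ∈ Finset.range (N + 1),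
      (Polynomial.C (a j) * Polynomial.X ^ (d * j)).coeff (d * m)
        = if j = m then a j else 0 := by
    intro j _
    rw [Polynomial.coeff_C_mul, Polynomial.coeff_X_pow]
    by_cases h : j = m
    · subst h; simp
    · rw [if_neg (fun he => h (by
        have := Nat.eq_of_mul_eq_mul_left (Nat.pos_of_ne_zero hd) he.symm
        omega)), mul_zero, if_neg h]
  rw [Finset.sum_congr rfl hc, Finset.sum_ite_eq' (Finset.range (N + 1)) m a]
  by_cases hm : m ∈ Finset.range (N + 1)
  · rw [if_pos hm]
  · rw [if_neg hm]
    exact (ha m (by simpa using Nat.lt_of_succ_le (Nat.succ_le_of_lt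
      (by simpa [Nat.lt_succ_iff, not_le] using hm)))).symm

/-- the antidiagonal convolution identity coming from `∏(1+xt)·∏(1-xt) = ∏(1-x²t²)`. -/
private lemma lemA (k s : ℕ) :
    ∑ p ∈ Finset.HasAntidiagonal.antidiagonal (2 * s),
        ((-1) ^ p.2 : MvPolynomial (Fin k) ℤ) * esymm (Fin k) ℤ p.1 * esymm (Fin k) ℤ p.2
      = (-1) ^ s * expand 2 (esymm (Fin k) ℤ s) := by
  classical
  set A := MvPolynomial (Fin k) ℤ
  set E : ℕ → A := fun j => esymm (Fin k) ℤ j with hE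
  set T : Polynomial A := Polynomial.X
  -- the three generating polynomials
  have hP : (∏ i : Fin k, (1 + Polynomial.C (X i : A) * T))
      = ∑ j ∈ Finset.range (k + 1), Polynomial.C (E j) * T ^ (1 * j) := by
    rw [gf_prod]
    refine Finset.sum_congr rfl fun j _ => ?_
    rw [one_mul]
    congr 1
    rw [Finset.sum_congr rfl fun t _ => (map_prod Polynomial.C (fun i => (X i : A)) t).symm,
        ← map_sum]
    rfl
  have hQ : (∏ i : Fin k, (1 + Polynomial.C (-(X i : A)) * T))
      = ∑ j ∈ Finset.range (k + 1), Polynomial.C ((-1) ^ j * E j) * T ^ (1 * j) := by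
    rw [gf_prod]
    refine Finset.sum_congr rfl fun j _ => ?_
    rw [one_mul]
    congr 1
    have : ∀ t ∈ Finset.powersetCard j (Finset.univ : Finset (Fin k)),
        (∏ i ∈ t, Polynomial.C (-(X i : A))) = Polynomial.C ((-1) ^ j * ∏ i ∈ t, (X i : A)) := by
      intro t ht
      rw [← map_prod]
      congr 1
      have : (∏ i ∈ t, (-(X i : A))) = (-1) ^ t.card * ∏ i ∈ t, (X i : A) := by
        rw [← Finset.prod_const, ← Finset.prod_mul_distrib]
        exact Finset.prod_congr rfl fun i _ => by ring
      rw [this, (Finset.mem_powersetCard.mp ht).2]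
    rw [Finset.sum_congr rfl this, ← map_sum, ← Finset.mul_sum]
    rfl
  have hR : (∏ i : Fin k, (1 + Polynomial.C (-((X i : A) ^ 2)) * T ^ 2))
      = ∑ j ∈ Finset.range (k + 1), Polynomial.C ((-1) ^ j * expand 2 (E j)) * T ^ (2 * j) := by
    rw [gf_prod]
    refine Finset.sum_congr rfl fun j _ => ?_
    rw [pow_mul]
    congr 1
    have : ∀ t ∈ Finset.powersetCard j (Finset.univ : Finset (Fin k)),
        (∏ i ∈ t, Polynomial.C (-((X i : A) ^ 2)))
          = Polynomial.C ((-1) ^ j * ∏ i ∈ t, (X i : A) ^ 2) := by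
      intro t ht
      rw [← map_prod]
      congr 1
      have : (∏ i ∈ t, (-((X i : A) ^ 2))) = (-1) ^ t.card * ∏ i ∈ t, (X i : A) ^ 2 := by
        rw [← Finset.prod_const, ← Finset.prod_mul_distrib]
        exact Finset.prod_congr rfl fun i _ => by ring
      rw [this, (Finset.mem_powersetCard.mp ht).2]
    rw [Finset.sum_congr rfl this, ← map_sum, ← Finset.mul_sum, expand_esymm]
  -- product identity
  have hPQ : (∏ i : Fin k, (1 + Polynomial.C (X i : A) * T)) *
      (∏ i : Fin k, (1 + Polynomial.C (-(X i : A)) * T))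
      = ∏ i : Fin k, (1 + Polynomial.C (-((X i : A) ^ 2)) * T ^ 2) := by
    rw [← Finset.prod_mul_distrib]
    refine Finset.prod_congr rfl fun i _ => ?_
    simp only [map_neg, map_pow]
    ring
  -- vanishing hypotheses
  have hEv : ∀ j, k < j → E j = 0 := fun j hj => esymm_vanish hj
  have hEv' : ∀ j, k < j → (-1) ^ j * E j = (0 : A) := fun j hj => by rw [hEv j hj, mul_zero]
  have hEv'' : ∀ j, k < j → (-1) ^ j * expand 2 (E j) = (0 : A) := fun j hj => by
    rw [hEv j hj, map_zero, mul_zero]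
  -- coefficients
  have cP : ∀ u, (∏ i : Fin k, (1 + Polynomial.C (X i : A) * T)).coeff u = E u := by
    intro u
    rw [hP]
    simpa only [one_mul] using coeff_helper k 1 one_ne_zero E hEv u
  have cQ : ∀ u, (∏ i : Fin k, (1 + Polynomial.C (-(X i : A)) * T)).coeff u
      = (-1) ^ u * E u := by
    intro u
    rw [hQ]
    simpa only [one_mul] using coeff_helper k 1 one_ne_zero (fun j => (-1) ^ j * E j) hEv' u
  have cR : (∏ i : Fin k, (1 + Polynomial.C (-((X i : A) ^ 2)) * T ^ 2)).coeff (2 * s)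
      = (-1) ^ s * expand 2 (E s) := by
    rw [hR]
    exact coeff_helper k 2 two_ne_zero (fun j => (-1) ^ j * expand 2 (E j)) hEv'' s
  have := congrArg (fun q : Polynomial A => q.coeff (2 * s)) hPQ
  simp only [Polynomial.coeff_mul] at this
  rw [cR] at this
  rw [← this]
  exact Finset.sum_congr rfl fun p _ => by rw [cP, cQ]; ring

/-- symmetrization of the antidiagonal sum. -/
private lemma lemB (k s : ℕ) :
    ∑ p ∈ Finset.HasAntidiagonal.antidiagonal (2 * s),
        ((-1) ^ p.2 : MvPolynomial (Fin k) ℤ) * esymm (Fin k) ℤ p.1 * esymm (Fin k) ℤ p.2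
      = (-1) ^ s * ((esymm (Fin k) ℤ s) ^ 2
          + 2 * ∑ i ∈ Finset.Icc 1 s, ((-1) ^ i : MvPolynomial (Fin k) ℤ)
              * esymm (Fin k) ℤ (s + i) * esymm (Fin k) ℤ (s - i)) := by
  classical
  set A := MvPolynomial (Fin k) ℤ
  set E : ℕ → A := fun j => esymm (Fin k) ℤ j with hE
  set g : ℕ → A := fun u => (-1) ^ (2 * s - u) * E u * E (2 * s - u) with hg
  have h1 : ∑ p ∈ Finset.HasAntidiagonal.antidiagonal (2 * s),
      ((-1) ^ p.2 : A) * E p.1 * E p.2 = ∑ u ∈ Finset.range (2 * s + 1), g u := by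
    rw [Finset.Nat.sum_antidiagonal_eq_sum_range_succ_mk]
  rw [show (∑ p ∈ Finset.HasAntidiagonal.antidiagonal (2 * s),
      ((-1) ^ p.2 : A) * esymm (Fin k) ℤ p.1 * esymm (Fin k) ℤ p.2)
      = ∑ u ∈ Finset.range (2 * s + 1), g u from h1]
  have hsplit1 : ∑ u ∈ Finset.Ico 0 s, g u + ∑ u ∈ Finset.Ico s (2 * s + 1), g u
      = ∑ u ∈ Finset.Ico 0 (2 * s + 1), g u :=
    Finset.sum_Ico_consecutive g (Nat.zero_le s) (by omega)
  have hsplit2 : ∑ u ∈ Finset.Ico s (s + 1), g u + ∑ u ∈ Finset.Ico (s + 1) (2 * s + 1), g u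
      = ∑ u ∈ Finset.Ico s (2 * s + 1), g u :=
    Finset.sum_Ico_consecutive g (by omega) (by omega)
  have hmid : ∑ u ∈ Finset.Ico s (s + 1), g u = g s := by
    rw [Nat.Ico_succ_singleton, Finset.sum_singleton]
  have hlow : ∑ u ∈ Finset.Ico 0 s, g u = ∑ i ∈ Finset.Icc 1 s, g (s - i) := by
    refine Finset.sum_nbij' (fun u => s - u) (fun i => s - i) ?_ ?_ ?_ ?_ ?_
    · intro u hu; simp only [Finset.mem_Ico] at hu; simp only [Finset.mem_Icc]; omega
    · intro i hi; simp only [Finset.mem_Icc] at hi; simp only [Finset.mem_Ico]; omega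
    · intro u hu; simp only [Finset.mem_Ico] at hu; omega
    · intro i hi; simp only [Finset.mem_Icc] at hi; omega
    · intro u hu
      simp only [Finset.mem_Ico] at hu
      congr 1
      omega
  have hhigh : ∑ u ∈ Finset.Ico (s + 1) (2 * s + 1), g u
      = ∑ i ∈ Finset.Icc 1 s, g (s + i) := by
    refine Finset.sum_nbij' (fun u => u - s) (fun i => s + i) ?_ ?_ ?_ ?_ ?_
    · intro u hu; simp only [Finset.mem_Ico] at hu; simp only [Finset.mem_Icc]; omega
    · intro i hi; simp only [Finset.mem_Icc] at hi; simp only [Finset.mem_Ico]; omega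
    · intro u hu; simp only [Finset.mem_Ico] at hu; omega
    · intro i hi; simp only [Finset.mem_Icc] at hi; omega
    · intro u hu
      simp only [Finset.mem_Ico] at hu
      congr 1
      omega
  rw [Finset.range_eq_Ico, ← hsplit1, ← hsplit2, hmid, hlow, hhigh]
  have hgs : g s = (-1) ^ s * E s * E s := by
    show (-1 : A) ^ (2 * s - s) * E s * E (2 * s - s) = _
    rw [show 2 * s - s = s from by omega]
  have hpair : ∀ i ∈ Finset.Icc 1 s,
      g (s - i) + g (s + i) = 2 * ((-1) ^ s * (((-1) ^ i : A) * E (s + i) * E (s - i))) := by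
    intro i hi
    rw [Finset.mem_Icc] at hi
    have e1 : 2 * s - (s + i) = s - i := by omega
    have e2 : 2 * s - (s - i) = s + i := by omega
    show (-1 : A) ^ (2 * s - (s - i)) * E (s - i) * E (2 * s - (s - i))
        + (-1 : A) ^ (2 * s - (s + i)) * E (s + i) * E (2 * s - (s + i)) = _
    rw [e1, e2]
    have hsign : ((-1 : A)) ^ (s - i) = (-1) ^ (s + i) := by
      rw [show s + i = (s - i) + 2 * i by omega, pow_add]
      rw [show ((-1 : A)) ^ (2 * i) = 1 from Even.neg_one_pow ⟨i, by ring⟩, mul_one]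
    rw [hsign, pow_add]
    ring
  rw [add_left_comm, ← Finset.sum_add_distrib, Finset.sum_congr rfl hpair, hgs]
  have hrhs : ((-1 : A)) ^ s * (2 * ∑ i ∈ Finset.Icc 1 s,
        ((-1) ^ i : A) * esymm (Fin k) ℤ (s + i) * esymm (Fin k) ℤ (s - i))
      = ∑ i ∈ Finset.Icc 1 s, 2 * ((-1) ^ s * (((-1) ^ i : A) * E (s + i) * E (s - i))) := by
    rw [Finset.mul_sum, Finset.mul_sum]
    exact Finset.sum_congr rfl fun i _ => by ring
  rw [mul_add, hrhs]
  ring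

private lemma keyIdentity (k s : ℕ) :
    (esymm (Fin k) ℤ s) ^ 2 + 2 * ∑ i ∈ Finset.Icc 1 s,
        ((-1) ^ i : MvPolynomial (Fin k) ℤ) * esymm (Fin k) ℤ (s + i) * esymm (Fin k) ℤ (s - i)
      = expand 2 (esymm (Fin k) ℤ s) := by
  have h := (lemB k s).symm.trans (lemA k s)
  have h2 := congrArg (fun x : MvPolynomial (Fin k) ℤ => ((-1 : MvPolynomial (Fin k) ℤ)) ^ s * x) h
  simp only [← mul_assoc, ← pow_add, Even.neg_one_pow (⟨s, rfl⟩ : Even (s + s)), one_mul] at h2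
  exact h2

private lemma expand_monomial' {σ : Type*} {p : ℕ} (hp : p ≠ 0) (d : σ →₀ ℕ) (r : ℤ) :
    expand (R := ℤ) p (monomial d r) = monomial (p • d) r := by
  rw [expand_monomial, monomial_eq, Finsupp.prod, Finsupp.support_smul_eq hp]

private lemma coeff_expand_smul {σ : Type*} {p : ℕ} (hp : p ≠ 0) (f : MvPolynomial σ ℤ)
    (d : σ →₀ ℕ) : coeff (p • d) (expand (R := ℤ) p f) = coeff d f := by
  classical
  conv_lhs => rw [f.as_sum]
  rw [map_sum, Finset.sum_congr rfl fun e _ => expand_monomial' hp e (coeff e f)]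
  rw [coeff_sum]
  have hc : ∀ e ∈ f.support,
      coeff (p • d) (monomial (p • e) (coeff e f)) = if e = d then coeff e f else 0 := by
    intro e _
    rw [coeff_monomial]
    by_cases h : e = d
    · subst h; simp
    · rw [if_neg (fun he => h (by
        ext i
        have := DFunLike.congr_fun he i
        simp only [Finsupp.smul_apply, smul_eq_mul] at this
        exact Nat.eq_of_mul_eq_mul_left (Nat.pos_of_ne_zero hp) this)), if_neg h]
  rw [Finset.sum_congr rfl hc, Finset.sum_ite_eq' f.support d (fun e => coeff e f)]
  by_cases hd : d ∈ f.support
  · rw [if_pos hd]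
  · rw [if_neg hd]
    exact (MvPolynomial.notMem_support_iff.mp hd).symm

private lemma expand_inj {σ : Type*} {p : ℕ} (hp : p ≠ 0) :
    Function.Injective (expand (R := ℤ) (σ := σ) p) := fun f g h =>
  MvPolynomial.ext _ _ fun d => by
    rw [← coeff_expand_smul hp f d, h, coeff_expand_smul hp g d]

/-- Theorem A, algebraic form: the ring homomorphism
`ξ : ℤ[e_1,…,e_k] → B = ℤ[c_1,c_2,…]/⟨S^s : s>k⟩` with
`e_i ↦ c_i^2 + 2 ∑_{j=1}^i (-1)^j c_{i+j} c_{i-j}` is injective.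
The variable `X i` of the source (for `i : Fin k`) represents `e_{i+1}`. -/
theorem stmt5 (k : ℕ) (hk : 1 ≤ k) :
    Function.Injective
      (MvPolynomial.aeval (R := ℤ)
        (fun i : Fin k =>
          Ideal.Quotient.mk (relIdealC k)
            (cC ((i : ℕ) + 1) ^ 2 +
              2 * ∑ j ∈ Finset.Icc 1 ((i : ℕ) + 1),
                ((-1) ^ j : MvPolynomial ℕ ℤ) * cC ((i : ℕ) + 1 + j) * cC ((i : ℕ) + 1 - j))) :
        MvPolynomial (Fin k) ℤ → _) := by
  classical
  -- the specialization `c_m ↦ e_m`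
  set Φ : MvPolynomial ℕ ℤ →ₐ[ℤ] MvPolynomial (Fin k) ℤ :=
    aeval (fun j : ℕ => esymm (Fin k) ℤ (j + 1)) with hΦ
  have hPhi_cC : ∀ m : ℕ, Φ (cC m) = esymm (Fin k) ℤ m := by
    intro m
    cases m with
    | zero => simp [cC]
    | succ n => simp [cC, hΦ]
  have hPhi_relC : ∀ s : ℕ, Φ (relC s) = expand 2 (esymm (Fin k) ℤ s) := by
    intro s
    rw [relC]
    simp only [map_add, map_mul, map_pow, map_sum, map_neg, map_one, map_ofNat, hPhi_cC]
    exact keyIdentity k s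
  have hker : relIdealC k ≤ RingHom.ker Φ.toRingHom := by
    rw [relIdealC, Ideal.span_le]
    rintro p ⟨s, hs, rfl⟩
    simp only [SetLike.mem_coe, RingHom.mem_ker]
    show Φ (relC s) = 0
    rw [hPhi_relC, esymm_vanish hs, map_zero]
  set F : (MvPolynomial ℕ ℤ ⧸ relIdealC k) →ₐ[ℤ] MvPolynomial (Fin k) ℤ :=
    Ideal.Quotient.liftₐ (relIdealC k) Φ (fun a ha => (RingHom.mem_ker (f := Φ.toRingHom)).mp (hker ha)) with hF
  -- the composite map
  have hcomp : ∀ x : MvPolynomial (Fin k) ℤ,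
      F (aeval (R := ℤ)
        (fun i : Fin k =>
          Ideal.Quotient.mk (relIdealC k)
            (cC ((i : ℕ) + 1) ^ 2 +
              2 * ∑ j ∈ Finset.Icc 1 ((i : ℕ) + 1),
                ((-1) ^ j : MvPolynomial ℕ ℤ) * cC ((i : ℕ) + 1 + j) * cC ((i : ℕ) + 1 - j))) x)
      = aeval (R := ℤ) (fun i : Fin k =>
          expand 2 (esymm (Fin k) ℤ ((i : ℕ) + 1))) x := by
    intro x
    rw [← AlgHom.comp_apply, MvPolynomial.comp_aeval]
    have hfun : (fun i : Fin k =>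
        F (Ideal.Quotient.mk (relIdealC k)
          (cC ((i : ℕ) + 1) ^ 2 +
            2 * ∑ j ∈ Finset.Icc 1 ((i : ℕ) + 1),
              ((-1) ^ j : MvPolynomial ℕ ℤ) * cC ((i : ℕ) + 1 + j) * cC ((i : ℕ) + 1 - j))))
        = fun i : Fin k => expand 2 (esymm (Fin k) ℤ ((i : ℕ) + 1)) := by
      funext i
      show F (Ideal.Quotient.mk (relIdealC k) (relC ((i : ℕ) + 1))) = _
      rw [hF, Ideal.Quotient.liftₐ_apply]
      exact hPhi_relC ((i : ℕ) + 1)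
    rw [hfun]
  -- injectivity of the target map
  have hinj : Function.Injective (aeval (R := ℤ) (fun i : Fin k =>
      expand 2 (esymm (Fin k) ℤ ((i : ℕ) + 1)))) := by
    have hEsucc : Function.Injective (aeval (R := ℤ) (fun i : Fin k =>
        esymm (Fin k) ℤ ((i : ℕ) + 1))) := by
      have h1 := esymmAlgHom_injective (σ := Fin k) ℤ (n := k) (by simp)
      intro x y hxy
      refine h1 ?_
      apply Subtype.ext
      rw [esymmAlgHom_apply, esymmAlgHom_apply]
      exact hxy
    have hdecomp : (aeval (R := ℤ) (fun i : Fin k =>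
        expand 2 (esymm (Fin k) ℤ ((i : ℕ) + 1))) :
          MvPolynomial (Fin k) ℤ →ₐ[ℤ] MvPolynomial (Fin k) ℤ)
        = (expand 2).comp (aeval (R := ℤ) (fun i : Fin k =>
            esymm (Fin k) ℤ ((i : ℕ) + 1))) := by
      apply MvPolynomial.algHom_ext
      intro i
      simp only [AlgHom.comp_apply, aeval_X]
    rw [hdecomp]
    simp only [AlgHom.coe_comp]
    exact (expand_inj two_ne_zero).comp hEsucc
  intro x y hxy
  apply hinj
  rw [← hcomp x, ← hcomp y, hxy]
end

section
/- Let R be a graded commutative ring which in each graded degree is a finitely generated abelian group, and suppose R is not finitely generated as a ring. Then there is no surjective ring homomorphism from a finitely generated ℂ-algebra onto ℂ ⊗_ℤ R that is compatible with a fixed family of surjections onto finitely generated quotients requiring unboundedly many generators. Concretely: the polynomial ring ℂ[e_1, ..., e_k] admits no surjective graded ℂ-algebra homomorphism onto ℂ[c_1, c_2, ...]/⟨c_s^2 + 2∑_{i=1}^s (-1)^i c_{s+i}c_{s-i} : s > k⟩ ⊗_ℤ ℂ. -/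
open MvPolynomial TensorProduct

noncomputable abbrev Tsq : Type := TrivSqZeroExt ℂ (ℕ →₀ ℂ)

noncomputable def wC (j : ℕ) : (ℕ →₀ ℂ) := if Odd j then 0 else Finsupp.single (j / 2) 1

noncomputable def g0 : MvPolynomial ℕ ℤ →+* Tsq :=
  (MvPolynomial.eval₂Hom (Int.castRingHom Tsq) (fun n => TrivSqZeroExt.inr (wC n)))

lemma g0_X (n : ℕ) : g0 (X n) = TrivSqZeroExt.inr (wC n) := by
  simp [g0]

lemma g0_cC_pos {m : ℕ} (hm : m ≠ 0) : g0 (cC m) = TrivSqZeroExt.inr (wC (m - 1)) := by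
  simp [cC, hm, g0_X]

lemma g0_rel {s : ℕ} (hs : 1 ≤ s) : g0 (relC s) = 0 := by
  have h1 : g0 (cC s ^ 2) = 0 := by
    rw [map_pow, g0_cC_pos (by omega), sq]
    exact TrivSqZeroExt.inr_mul_inr ℂ _ _
  have hterm : ∀ i ∈ Finset.Icc 1 s,
      g0 (((-1) ^ i : MvPolynomial ℕ ℤ) * cC (s + i) * cC (s - i)) = 0 := by
    intro i hi
    obtain ⟨hi1, hi2⟩ := Finset.mem_Icc.mp hi
    rcases eq_or_lt_of_le hi2 with rfl | hlt
    · have hss : i - i = 0 := by omega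
      have hmid : g0 (cC (i + i)) = 0 := by
        have hodd : Odd (i + i - 1) := by rw [Nat.odd_iff]; omega
        rw [g0_cC_pos (by omega)]
        simp [wC, hodd]
      rw [map_mul, map_mul, hmid, mul_zero, zero_mul]
    · rw [map_mul, map_mul, mul_assoc, g0_cC_pos (by omega), g0_cC_pos (by omega),
        TrivSqZeroExt.inr_mul_inr, mul_zero]
  rw [relC, map_add, h1, zero_add, map_mul, map_sum, Finset.sum_congr rfl hterm]
  simp

lemma g0_ker {k : ℕ} : ∀ a ∈ relIdealC k, g0 a = 0 := by
  intro a ha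
  refine (Ideal.span_le.mpr ?_ : relIdealC k ≤ RingHom.ker g0) ha
  rintro p ⟨s, hks, rfl⟩
  exact g0_rel (by omega)

noncomputable def gQ (k : ℕ) : (MvPolynomial ℕ ℤ ⧸ relIdealC k) →+* Tsq :=
  Ideal.Quotient.lift _ g0 g0_ker

noncomputable def ψC (k : ℕ) : (ℂ ⊗[ℤ] (MvPolynomial ℕ ℤ ⧸ relIdealC k)) →ₐ[ℂ] Tsq :=
  Algebra.TensorProduct.lift (Algebra.ofId ℂ Tsq) (gQ k).toIntAlgHom (fun _ _ => Commute.all _ _)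

lemma ψC_tmul (k : ℕ) (q : MvPolynomial ℕ ℤ ⧸ relIdealC k) :
    ψC k (1 ⊗ₜ q) = gQ k q := by
  unfold ψC
  erw [Algebra.TensorProduct.lift_tmul]
  simp
  rfl

/-- Remark 3.1: there is no surjective `ℂ`-algebra homomorphism from the
polynomial ring `ℂ[e_1,…,e_k]` onto the complexified stable cohomology ring
`ℍ*(IG_k, ℂ) = (ℤ[c_1,c_2,…]/⟨S^s : s>k⟩) ⊗_ℤ ℂ`. -/
theorem stmt12 (k : ℕ) (hk : 1 ≤ k)
    (φ : MvPolynomial (Fin k) ℂ →ₐ[ℂ] (ℂ ⊗[ℤ] (MvPolynomial ℕ ℤ ⧸ relIdealC k))) :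
    ¬ Function.Surjective φ := by
  intro hsurj
  set h : MvPolynomial (Fin k) ℂ →ₐ[ℂ] Tsq := (ψC k).comp φ with hh
  set W : Submodule ℂ (ℕ →₀ ℂ) :=
    Submodule.span ℂ (Set.range fun i : Fin k => (h (X i)).snd) with hW
  have hmem : ∀ p : MvPolynomial (Fin k) ℂ, (h p).snd ∈ W := by
    intro p
    induction p using MvPolynomial.induction_on with
    | C a =>
        rw [show h (C a) = algebraMap ℂ Tsq a from h.commutes a,
          TrivSqZeroExt.algebraMap_eq_inl, TrivSqZeroExt.snd_inl]
        exact W.zero_mem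
    | add p q hp hq =>
        rw [map_add, TrivSqZeroExt.snd_add]
        exact W.add_mem hp hq
    | mul_X p n hp =>
        rw [map_mul, TrivSqZeroExt.snd_mul, op_smul_eq_smul]
        exact W.add_mem (W.smul_mem _ (Submodule.subset_span ⟨n, rfl⟩)) (W.smul_mem _ hp)
  have hsingle : ∀ n : ℕ, Finsupp.single n (1 : ℂ) ∈ W := by
    intro n
    obtain ⟨p, hp⟩ := hsurj (1 ⊗ₜ (Ideal.Quotient.mk (relIdealC k) (X (2 * n))))
    have heq : h p = TrivSqZeroExt.inr (Finsupp.single n 1) := by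
      rw [hh, AlgHom.comp_apply, hp, ψC_tmul]
      have hgq : gQ k (Ideal.Quotient.mk (relIdealC k) (X (2 * n))) = g0 (X (2 * n)) := rfl
      rw [hgq, g0_X]
      have hno : ¬ Odd (2 * n) := by rw [Nat.odd_iff]; omega
      congr 1
      simp [wC, hno, Nat.mul_div_cancel_left n (by norm_num : 0 < 2)]
    have h2 := hmem p
    rwa [heq, TrivSqZeroExt.snd_inr] at h2
  have htop : W = ⊤ := by
    refine top_unique ?_
    rw [← (Finsupp.basisSingleOne : Module.Basis ℕ ℂ (ℕ →₀ ℂ)).span_eq]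
    refine Submodule.span_le.mpr ?_
    rintro _ ⟨n, rfl⟩
    simpa [Finsupp.coe_basisSingleOne] using hsingle n
  have hfin : Module.Finite ℂ (ℕ →₀ ℂ) :=
    ⟨htop ▸ Submodule.fg_span (Set.finite_range _)⟩
  have hlt := Module.rank_lt_aleph0 ℂ (ℕ →₀ ℂ)
  rw [rank_finsupp_self] at hlt
  simp at hlt
end

section
/- Let f: ℤ[e_1,...,e_k] → R be a graded ring homomorphism (deg e_i = 4i) to a graded ring R whose graded pieces are finitely generated free ℤ-modules. If the induced map (ℤ/2)[e_1,...,e_k] → (ℤ/2) ⊗_ℤ R sends the e_i to elements whose images are algebraically independent over ℤ/2, then f is injective and ℂ ⊗ f: ℂ[e_1,...,e_k] → ℂ ⊗_ℤ R is injective. -/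
open TensorProduct

/-- let `f : ℤ[e_1,…,e_k] → R` be a graded ring homomorphism (`deg e_i = 4i`,
expressed by `f(e_i) ∈ 𝒜 (4i)`) to a graded ring `R` whose graded pieces are finitely
generated free `ℤ`-modules.  If the images of the `e_i` under the induced map
`(ℤ/2)[e_1,…,e_k] → (ℤ/2) ⊗_ℤ R` are algebraically independent over `ℤ/2`, then `f` is
injective and `ℂ ⊗ f` is injective. -/
theorem stmt19 (k : ℕ) (R : Type*) [CommRing R] (𝒜 : ℕ → AddSubgroup R) [GradedRing 𝒜]
    (hfree : ∀ n, Module.Free ℤ (𝒜 n)) (hfg : ∀ n, Module.Finite ℤ (𝒜 n))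
    (f : MvPolynomial (Fin k) ℤ →+* R)
    (hgraded : ∀ i : Fin k, f (MvPolynomial.X i) ∈ 𝒜 (4 * ((i : ℕ) + 1)))
    (hind : AlgebraicIndependent (ZMod 2)
      (fun i : Fin k =>
        (Algebra.TensorProduct.includeRight : R →ₐ[ℤ] ZMod 2 ⊗[ℤ] R)
          (f (MvPolynomial.X i)))) :
    Function.Injective f ∧
      Function.Injective
        (LinearMap.lTensor ℂ f.toAddMonoidHom.toIntLinearMap :
          ℂ ⊗[ℤ] MvPolynomial (Fin k) ℤ →ₗ[ℤ] ℂ ⊗[ℤ] R) := by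
  -- R is 2-torsion-free, since it decomposes as a direct sum of free ℤ-modules
  have hRtf : ∀ r : R, (2 : ℤ) • r = 0 → r = 0 := by
    intro r h2
    have inst := fun n => Module.Free.instIsTorsionFree (R := ℤ) (M := 𝒜 n)
    have h : (DirectSum.decomposeAddEquiv 𝒜) ((2 : ℤ) • r) = 0 := by rw [h2]; simp
    rw [map_zsmul] at h
    have h4 : DirectSum.decomposeAddEquiv 𝒜 r = 0 := by
      refine DFinsupp.ext fun n => ?_
      have h3 : (2 : ℤ) • ((DirectSum.decomposeAddEquiv 𝒜 r) n) = 0 := by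
        rw [← DFinsupp.smul_apply, h]; rfl
      rcases smul_eq_zero.mp h3 with hc | hc
      · norm_num at hc
      · simpa using hc
    simpa using (DirectSum.decomposeAddEquiv 𝒜).injective (by rw [h4]; simp)
  -- the commuting square: aeval ∘ (reduction mod 2) = includeRight ∘ f
  have hdiag : ∀ p : MvPolynomial (Fin k) ℤ,
      (MvPolynomial.aeval (fun i : Fin k =>
          (Algebra.TensorProduct.includeRight : R →ₐ[ℤ] ZMod 2 ⊗[ℤ] R) (f (MvPolynomial.X i))) :
        MvPolynomial (Fin k) (ZMod 2) →ₐ[ZMod 2] ZMod 2 ⊗[ℤ] R)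
        (MvPolynomial.map (Int.castRingHom (ZMod 2)) p)
      = (Algebra.TensorProduct.includeRight : R →ₐ[ℤ] ZMod 2 ⊗[ℤ] R) (f p) := by
    intro p
    have : ((MvPolynomial.aeval (fun i : Fin k =>
          (Algebra.TensorProduct.includeRight : R →ₐ[ℤ] ZMod 2 ⊗[ℤ] R) (f (MvPolynomial.X i))) :
        MvPolynomial (Fin k) (ZMod 2) →ₐ[ZMod 2] ZMod 2 ⊗[ℤ] R) :
          MvPolynomial (Fin k) (ZMod 2) →+* ZMod 2 ⊗[ℤ] R).comp
        (MvPolynomial.map (Int.castRingHom (ZMod 2)))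
        = ((Algebra.TensorProduct.includeRight : R →ₐ[ℤ] ZMod 2 ⊗[ℤ] R) :
            R →+* ZMod 2 ⊗[ℤ] R).comp f := by
      apply MvPolynomial.ringHom_ext
      · intro r
        rw [show (MvPolynomial.C r : MvPolynomial (Fin k) ℤ) = (r : MvPolynomial (Fin k) ℤ) by
          simp]
        simp [map_intCast]
      · intro i
        simp
    exact DFunLike.congr_fun this p
  -- key claim: kernel of f is trivial, by infinite 2-adic descent
  have key : ∀ n : ℕ, ∀ p : MvPolynomial (Fin k) ℤ,
      (∀ m, (p.coeff m).natAbs ≤ n) → f p = 0 → p = 0 := by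
    intro n
    induction n using Nat.strong_induction_on with
    | _ n ih =>
      intro p hb hp
      rcases Nat.eq_zero_or_pos n with hn | hn
      · ext m
        have := hb m
        rw [hn, Nat.le_zero, Int.natAbs_eq_zero] at this
        simpa using this
      · -- the mod-2 reduction of p maps to 0 under the injective aeval, so it is 0
        have hmap : MvPolynomial.map (Int.castRingHom (ZMod 2)) p = 0 := by
          apply hind
          rw [map_zero, hdiag, hp, map_zero]
        have hdvd : MvPolynomial.C (2 : ℤ) ∣ p := by
          rw [MvPolynomial.C_dvd_iff_dvd_coeff]
          intro m
          have hc : ((p.coeff m : ℤ) : ZMod 2) = 0 := by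
            have h2 := congrArg (MvPolynomial.coeff m) hmap
            rw [MvPolynomial.coeff_map] at h2
            simpa using h2
          have := (ZMod.intCast_zmod_eq_zero_iff_dvd (p.coeff m) 2).mp hc
          exact_mod_cast this
        obtain ⟨q, hq⟩ := hdvd
        have hq0 : f q = 0 := by
          apply hRtf
          have : f p = ((2 : ℤ) : R) * f q := by
            rw [hq, map_mul]
            congr 1
            rw [show (MvPolynomial.C (2 : ℤ) : MvPolynomial (Fin k) ℤ)
              = ((2 : ℤ) : MvPolynomial (Fin k) ℤ) by simp, map_intCast]
          rw [zsmul_eq_mul, ← this, hp]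
        have hb' : ∀ m, (q.coeff m).natAbs ≤ n / 2 := by
          intro m
          have h1 := hb m
          rw [hq, MvPolynomial.coeff_C_mul] at h1
          rw [Int.natAbs_mul] at h1
          have h2 : (2 : ℤ).natAbs = 2 := rfl
          rw [h2] at h1
          omega
        have hq' := ih (n / 2) (Nat.div_lt_self hn one_lt_two) q hb' hq0
        rw [hq, hq', mul_zero]
  have hinj : Function.Injective f := by
    intro p q hpq
    have h0 : f (p - q) = 0 := by rw [map_sub, hpq, sub_self]
    have := key ((p - q).support.sup fun m => ((p - q).coeff m).natAbs) (p - q)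
      (fun m => by
        by_cases hm : m ∈ (p - q).support
        · exact Finset.le_sup (f := fun m => ((p - q).coeff m).natAbs) hm
        · rw [MvPolynomial.notMem_support_iff.mp hm]; simp) h0
    exact sub_eq_zero.mp this
  refine ⟨hinj, ?_⟩
  haveI : Module.Flat ℤ ℚ := IsLocalization.flat _ (nonZeroDivisors ℤ)
  haveI : Module.Flat ℤ ℂ := Module.Flat.trans ℤ ℚ ℂ
  exact Module.Flat.lTensor_preserves_injective_linearMap _ hinj
end
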